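/- Fix C2 > 0 and m1, m2 ∈ ℝ, and set |m| = √(m1² + m2²). Every global minimizer l* > 0 of the function g(l) = l⁻⁴ · (9 + exp(2l(l − 2m2)/C2) + exp(2l(l + √3·m1 + m2)/C2) + exp(2l(l − √3·m1 + m2)/C2)) over (0,∞) satisfies √C2 − |m| < l* < √2·√C2 + |m|. -/

import Mathlib

open Real

/-- The (rescaled) variance `S(l; C2)` of the error on the estimate of `C2`,
as a function of the edge length `l`. -/
noncomputable def errVarC2 (C2 m1 m2 l : ℝ) : ℝ :=
  (l ^ 4)⁻¹ * (9 + Real.exp (2 * l * (l - 2 * m2) / C2)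
    + Real.exp (2 * l * (l + Real.sqrt 3 * m1 + m2) / C2)
    + Real.exp (2 * l * (l - Real.sqrt 3 * m1 + m2) / C2))

theorem errVarC2_hasDeriv (C2 m1 m2 t : ℝ) (hC2 : 0 < C2) (ht : 0 < t) :
    HasDerivAt (errVarC2 C2 m1 m2)
      (-(4*t^3) / (t^4)^2 * (9 + Real.exp (2*t*(t - 2*m2)/C2)
          + Real.exp (2*t*(t + Real.sqrt 3*m1 + m2)/C2)
          + Real.exp (2*t*(t - Real.sqrt 3*m1 + m2)/C2))
        + (t^4)⁻¹ * (Real.exp (2*t*(t - 2*m2)/C2) * ((2*(t - 2*m2) + 2*t)/C2)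
          + Real.exp (2*t*(t + Real.sqrt 3*m1 + m2)/C2) * ((2*(t + Real.sqrt 3*m1 + m2) + 2*t)/C2)
          + Real.exp (2*t*(t - Real.sqrt 3*m1 + m2)/C2) * ((2*(t - Real.sqrt 3*m1 + m2) + 2*t)/C2))) t := by
  have hinv : HasDerivAt (fun l : ℝ => (l^4)⁻¹) (-(4*t^3) / (t^4)^2) t := by
    have := (hasDerivAt_pow 4 t).inv (pow_ne_zero 4 ht.ne')
    norm_num at this
    exact this
  have hx1 : HasDerivAt (fun l : ℝ => 2*l*(l - 2*m2)/C2) ((2*(t - 2*m2) + 2*t)/C2) t := by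
    have := (((hasDerivAt_id t).const_mul 2).mul ((hasDerivAt_id t).sub_const (2*m2))).div_const C2
    simp only [id_eq] at this
    exact this.congr_deriv (by ring)
  have hx2 : HasDerivAt (fun l : ℝ => 2*l*(l + Real.sqrt 3*m1 + m2)/C2) ((2*(t + Real.sqrt 3*m1 + m2) + 2*t)/C2) t := by
    have := (((hasDerivAt_id t).const_mul 2).mul (((hasDerivAt_id t).add_const (Real.sqrt 3*m1)).add_const m2)).div_const C2
    simp only [id_eq] at this
    exact this.congr_deriv (by ring)
  have hx3 : HasDerivAt (fun l : ℝ => 2*l*(l - Real.sqrt 3*m1 + m2)/C2) ((2*(t - Real.sqrt 3*m1 + m2) + 2*t)/C2) t := by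
    have := (((hasDerivAt_id t).const_mul 2).mul (((hasDerivAt_id t).sub_const (Real.sqrt 3*m1)).add_const m2)).div_const C2
    simp only [id_eq] at this
    exact this.congr_deriv (by ring)
  have hE : HasDerivAt (fun l : ℝ => 9 + Real.exp (2*l*(l - 2*m2)/C2)
      + Real.exp (2*l*(l + Real.sqrt 3*m1 + m2)/C2)
      + Real.exp (2*l*(l - Real.sqrt 3*m1 + m2)/C2))
      (Real.exp (2*t*(t - 2*m2)/C2) * ((2*(t - 2*m2) + 2*t)/C2)
        + Real.exp (2*t*(t + Real.sqrt 3*m1 + m2)/C2) * ((2*(t + Real.sqrt 3*m1 + m2) + 2*t)/C2)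
        + Real.exp (2*t*(t - Real.sqrt 3*m1 + m2)/C2) * ((2*(t - Real.sqrt 3*m1 + m2) + 2*t)/C2)) t := by
    have := ((hx1.exp.const_add 9).add hx2.exp).add hx3.exp
    exact this
  exact hinv.mul hE

theorem key36 (C2 m1 m2 t : ℝ) (hC2 : 0 < C2) (ht : 0 < t)
    (hmin : ∀ l : ℝ, 0 < l → errVarC2 C2 m1 m2 t ≤ errVarC2 C2 m1 m2 l) :
    Real.exp (2*t*(t - 2*m2)/C2) * ((4*t^2 - 4*m2*t)/C2 - 4)
      + Real.exp (2*t*(t + Real.sqrt 3*m1 + m2)/C2) * ((4*t^2 + 2*(Real.sqrt 3*m1 + m2)*t)/C2 - 4)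
      + Real.exp (2*t*(t - Real.sqrt 3*m1 + m2)/C2) * ((4*t^2 - 2*(Real.sqrt 3*m1 - m2)*t)/C2 - 4) = 36 := by
  have hD := errVarC2_hasDeriv C2 m1 m2 t hC2 ht
  have hloc : IsLocalMin (errVarC2 C2 m1 m2) t := by
    have hmem : Set.Ioi (0:ℝ) ∈ nhds t := (isOpen_Ioi).mem_nhds ht
    filter_upwards [hmem] with l hl
    exact hmin l hl
  have hzero := hloc.hasDerivAt_eq_zero hD
  set e1 := Real.exp (2*t*(t - 2*m2)/C2)
  set e2 := Real.exp (2*t*(t + Real.sqrt 3*m1 + m2)/C2)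
  set e3 := Real.exp (2*t*(t - Real.sqrt 3*m1 + m2)/C2)
  have ht4 : (t:ℝ)^4 ≠ 0 := pow_ne_zero 4 ht.ne'
  field_simp at hzero ⊢
  have h7 : t^7 * (-(4*C2)*(9+e1+e2+e3)
      + (e1*(2*(t-2*m2)+2*t) + e2*(2*(t+Real.sqrt 3*m1+m2)+2*t) + e3*(2*(t-Real.sqrt 3*m1+m2)+2*t))*t) = 0 := by
    linear_combination t^7 * hzero
  have hX : -(4*C2)*(9+e1+e2+e3)
      + (e1*(2*(t-2*m2)+2*t) + e2*(2*(t+Real.sqrt 3*m1+m2)+2*t) + e3*(2*(t-Real.sqrt 3*m1+m2)+2*t))*t = 0 :=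
    by rcases mul_eq_zero.mp h7 with h | h
       · exact absurd h (pow_ne_zero 7 ht.ne')
       · exact h
  linear_combination hX

set_option maxHeartbeats 1000000 in
/-- Every global minimizer `l*` of `S(·; C2)` on `(0,∞)` satisfies
`√C2 − |m| < l* < √2·√C2 + |m|` (Proposition 2). -/
theorem errVarC2_minimizer_bounds (C2 m1 m2 lstar : ℝ) (hC2 : 0 < C2)
    (hlstar : 0 < lstar)
    (hmin : ∀ l : ℝ, 0 < l → errVarC2 C2 m1 m2 lstar ≤ errVarC2 C2 m1 m2 l) :
    Real.sqrt C2 - Real.sqrt (m1 ^ 2 + m2 ^ 2) < lstar ∧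
    lstar < Real.sqrt 2 * Real.sqrt C2 + Real.sqrt (m1 ^ 2 + m2 ^ 2) := by
  set t := lstar with htdef
  set M := Real.sqrt (m1 ^ 2 + m2 ^ 2) with hMdef
  set R := Real.sqrt C2 with hRdef
  have hM0 : 0 ≤ M := Real.sqrt_nonneg _
  have hM2 : M ^ 2 = m1 ^ 2 + m2 ^ 2 := Real.sq_sqrt (by positivity)
  have hR0 : 0 ≤ R := Real.sqrt_nonneg _
  have hR2 : R ^ 2 = C2 := Real.sq_sqrt hC2.le
  have hs3 : Real.sqrt 3 ^ 2 = 3 := Real.sq_sqrt (by norm_num)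
  have hm2U : m2 ≤ M := by nlinarith [sq_nonneg (M - m2), sq_nonneg m1]
  have hm2L : -M ≤ m2 := by nlinarith [sq_nonneg (M + m2), sq_nonneg m1]
  have hc2sq : (Real.sqrt 3 * m1 + m2) ^ 2 ≤ (2*M) ^ 2 := by
    nlinarith [sq_nonneg (m1 - Real.sqrt 3 * m2)]
  have hc3sq : (Real.sqrt 3 * m1 - m2) ^ 2 ≤ (2*M) ^ 2 := by
    nlinarith [sq_nonneg (m1 + Real.sqrt 3 * m2)]
  have hc2U : Real.sqrt 3 * m1 + m2 ≤ 2*M := by nlinarith [sq_nonneg (Real.sqrt 3 * m1 + m2 - 2*M)]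
  have hc2L : -(2*M) ≤ Real.sqrt 3 * m1 + m2 := by nlinarith [sq_nonneg (Real.sqrt 3 * m1 + m2 + 2*M)]
  have hc3U : Real.sqrt 3 * m1 - m2 ≤ 2*M := by nlinarith [sq_nonneg (Real.sqrt 3 * m1 - m2 - 2*M)]
  have hc3L : -(2*M) ≤ Real.sqrt 3 * m1 - m2 := by nlinarith [sq_nonneg (Real.sqrt 3 * m1 - m2 + 2*M)]
  have key := key36 C2 m1 m2 t hC2 hlstar hmin
  have he1 := Real.exp_pos (2*t*(t - 2*m2)/C2)
  have he2 := Real.exp_pos (2*t*(t + Real.sqrt 3*m1 + m2)/C2)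
  have he3 := Real.exp_pos (2*t*(t - Real.sqrt 3*m1 + m2)/C2)
  constructor
  · -- lower bound
    by_contra hcon
    push_neg at hcon
    -- t ≤ R - M
    have ht1 : t + M ≤ R := by linarith
    have ht2 : t ≤ R := by linarith
    have hprod : t * (t + M) ≤ C2 := by
      have hmm := mul_le_mul ht2 ht1 (by linarith : (0:ℝ) ≤ t + M) hR0
      have hRR : R * R = C2 := by rw [← hR2]; ring
      linarith
    have hb1 : (4*t^2 - 4*m2*t)/C2 - 4 ≤ 0 := by
      rw [sub_nonpos, div_le_iff₀ hC2]
      nlinarith [mul_nonneg hlstar.le (sub_nonneg.mpr hm2L : (0:ℝ) ≤ m2 - -M)]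
    have hb2 : (4*t^2 + 2*(Real.sqrt 3*m1 + m2)*t)/C2 - 4 ≤ 0 := by
      rw [sub_nonpos, div_le_iff₀ hC2]
      nlinarith [mul_nonneg hlstar.le (sub_nonneg.mpr hc2U)]
    have hb3 : (4*t^2 - 2*(Real.sqrt 3*m1 - m2)*t)/C2 - 4 ≤ 0 := by
      rw [sub_nonpos, div_le_iff₀ hC2]
      nlinarith [mul_nonneg hlstar.le (sub_nonneg.mpr hc3L : (0:ℝ) ≤ Real.sqrt 3*m1 - m2 - -(2*M))]
    linarith [mul_nonpos_of_nonneg_of_nonpos he1.le hb1,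
      mul_nonpos_of_nonneg_of_nonpos he2.le hb2,
      mul_nonpos_of_nonneg_of_nonpos he3.le hb3]
  · -- upper bound
    by_contra hcon
    push_neg at hcon
    -- √2 R + M ≤ t
    have h1 : Real.sqrt 2 * R ≤ t - M := by linarith
    have h0 : 0 ≤ Real.sqrt 2 * R := mul_nonneg (Real.sqrt_nonneg 2) hR0
    have h2 : Real.sqrt 2 * R ≤ t := by linarith
    have hp : (Real.sqrt 2*R)*(Real.sqrt 2*R) ≤ t*(t-M) := mul_le_mul h2 h1 h0 (le_trans h0 h2)
    have hs2 : Real.sqrt 2 ^ 2 = 2 := Real.sq_sqrt (by norm_num)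
    have hq : (Real.sqrt 2*R)*(Real.sqrt 2*R) = 2*C2 := by linear_combination R^2 * hs2 + 2 * hR2
    have htM : 2*C2 ≤ t*(t-M) := by linarith
    have ht2 : 2*C2 ≤ t^2 := by nlinarith [mul_nonneg hlstar.le hM0]
    have hb1 : 4 ≤ (4*t^2 - 4*m2*t)/C2 - 4 := by
      rw [le_sub_iff_add_le, le_div_iff₀ hC2]
      nlinarith [mul_nonneg hlstar.le (sub_nonneg.mpr hm2U)]
    have hb2 : 4 ≤ (4*t^2 + 2*(Real.sqrt 3*m1 + m2)*t)/C2 - 4 := by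
      rw [le_sub_iff_add_le, le_div_iff₀ hC2]
      nlinarith [mul_nonneg hlstar.le (sub_nonneg.mpr hc2L : (0:ℝ) ≤ Real.sqrt 3*m1 + m2 - -(2*M))]
    have hb3 : 4 ≤ (4*t^2 - 2*(Real.sqrt 3*m1 - m2)*t)/C2 - 4 := by
      rw [le_sub_iff_add_le, le_div_iff₀ hC2]
      nlinarith [mul_nonneg hlstar.le (sub_nonneg.mpr hc3U)]
    have he4 : (9:ℝ) < Real.exp 4 := by
      have hlt : (3:ℝ) < Real.exp 2 := by
        nlinarith [Real.add_one_lt_exp (by norm_num : (2:ℝ) ≠ 0)]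
      have heq : Real.exp 4 = Real.exp 2 * Real.exp 2 := by
        rw [← Real.exp_add]; norm_num
      nlinarith
    have hone : 4 ≤ 2*t*(t - 2*m2)/C2 ∨ 4 ≤ 2*t*(t + Real.sqrt 3*m1 + m2)/C2
        ∨ 4 ≤ 2*t*(t - Real.sqrt 3*m1 + m2)/C2 := by
      by_contra hc
      push_neg at hc
      obtain ⟨hc1, hc2, hc3⟩ := hc
      rw [div_lt_iff₀ hC2] at hc1 hc2 hc3
      nlinarith
    have p1 : 4 * Real.exp (2*t*(t - 2*m2)/C2) ≤ Real.exp (2*t*(t - 2*m2)/C2) * ((4*t^2 - 4*m2*t)/C2 - 4) := by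
      have := mul_le_mul_of_nonneg_left hb1 he1.le
      linarith
    have p2 : 4 * Real.exp (2*t*(t + Real.sqrt 3*m1 + m2)/C2) ≤ Real.exp (2*t*(t + Real.sqrt 3*m1 + m2)/C2) * ((4*t^2 + 2*(Real.sqrt 3*m1 + m2)*t)/C2 - 4) := by
      have := mul_le_mul_of_nonneg_left hb2 he2.le
      linarith
    have p3 : 4 * Real.exp (2*t*(t - Real.sqrt 3*m1 + m2)/C2) ≤ Real.exp (2*t*(t - Real.sqrt 3*m1 + m2)/C2) * ((4*t^2 - 2*(Real.sqrt 3*m1 - m2)*t)/C2 - 4) := by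
      have := mul_le_mul_of_nonneg_left hb3 he3.le
      linarith
    rcases hone with hx | hx | hx
    · have : Real.exp 4 ≤ Real.exp (2*t*(t - 2*m2)/C2) := Real.exp_le_exp.mpr hx
      linarith
    · have : Real.exp 4 ≤ Real.exp (2*t*(t + Real.sqrt 3*m1 + m2)/C2) := Real.exp_le_exp.mpr hx
      linarith
    · have : Real.exp 4 ≤ Real.exp (2*t*(t - Real.sqrt 3*m1 + m2)/C2) := Real.exp_le_exp.mpr hx
      linarith
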